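/- (Proposition 1: incoherence of the concatenated code.) Let 1 ≤ K ≤ q and let f, g ∈ F_q[X] be distinct polynomials of degree < K. Then |⟨v_f, v_g⟩| ≤ (K−1)·q, and consequently |⟨v_f, v_g⟩| / (‖v_f‖₂ · ‖v_g‖₂) ≤ (K−1)/q = 1 − (N−K+1)/N, where N = q. That is, the concatenated Reed–Solomon ∘ Hadamard code is (1 − (N−K+1)/N)-incoherent. -/

import Mathlib

open Finset Polynomial


/-- Proposition 1: incoherence of the concatenated RS ∘ Hadamard code.
For distinct polynomials `f, g` of degree `< K` (with `1 ≤ K ≤ q`),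
`|⟨v_f, v_g⟩| ≤ (K−1)·q`, and hence
`|⟨v_f, v_g⟩| / (‖v_f‖₂‖v_g‖₂) ≤ (K−1)/q = 1 − (N−K+1)/N` with `N = q`. -/
theorem stmt2 (p : ℕ) [Fact p.Prime] (m : ℕ) (hm : 1 ≤ m)
    (F : Type) [Field F] [Fintype F] [Algebra (ZMod p) F]
    (hcard : Fintype.card F = p ^ m)
    (ζ : ℂ) (hζ : ζ = Complex.exp (2 * Real.pi * Complex.I / p))
    (K : ℕ) (hK1 : 1 ≤ K) (hKq : K ≤ Fintype.card F)
    (v : Polynomial F → F × F → ℂ)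
    (hv : ∀ (f : Polynomial F) (xb : F × F),
      v f xb = ζ ^ (Algebra.trace (ZMod p) F (Polynomial.eval xb.1 f * xb.2)).val)
    (f g : Polynomial F) (hfg : f ≠ g) (hf : f.degree < K) (hg : g.degree < K) :
    ‖∑ xb : F × F, v f xb * (starRingEnd ℂ) (v g xb)‖
      ≤ ((K : ℝ) - 1) * (Fintype.card F : ℝ) ∧
    ‖∑ xb : F × F, v f xb * (starRingEnd ℂ) (v g xb)‖ /
        (Real.sqrt (∑ xb : F × F, Complex.normSq (v f xb)) *
          Real.sqrt (∑ xb : F × F, Complex.normSq (v g xb)))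
      ≤ ((K : ℝ) - 1) / (Fintype.card F : ℝ) ∧
    ((K : ℝ) - 1) / (Fintype.card F : ℝ)
      = 1 - ((Fintype.card F : ℝ) - (K : ℝ) + 1) / (Fintype.card F : ℝ) := by
  have hp : p.Prime := Fact.out
  have hp0 : p ≠ 0 := hp.ne_zero
  haveI : NeZero p := ⟨hp0⟩
  set q : ℕ := Fintype.card F with hq
  have hq0 : 0 < q := Fintype.card_pos
  -- primitive root
  have hprim : IsPrimitiveRoot ζ p := by
    rw [hζ]; exact Complex.isPrimitiveRoot_exp p hp0
  have hζp : ζ ^ p = 1 := hprim.pow_eq_one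
  have habsζ : ‖ζ‖ = 1 := by
    rw [hζ]
    have : (2 * Real.pi * Complex.I / p) = Complex.I * (2 * Real.pi / p) := by
      push_cast; ring
    rw [this]
    norm_cast
    rw [Complex.norm_exp]
    simp [Complex.mul_re]
  -- additive characters
  set ψ0 : AddChar (ZMod p) ℂ := AddChar.zmodChar p hζp with hψ0
  set ψ : AddChar F ℂ :=
    ψ0.compAddMonoidHom (Algebra.trace (ZMod p) F).toAddMonoidHom with hψ
  have hψapp : ∀ y : F, ψ y = ζ ^ (Algebra.trace (ZMod p) F y).val := fun y => rfl
  have habsψ : ∀ y : F, ‖ψ y‖ = 1 := by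
    intro y; rw [hψapp, norm_pow, habsζ, one_pow]
  have hψprim : ψ.IsPrimitive := by
    intro a ha
    have hnd : ∃ b : F, Algebra.trace (ZMod p) F (a * b) ≠ 0 := by
      haveI : CharP F p := charP_of_injective_algebraMap (algebraMap (ZMod p) F).injective p
      have htr := (traceForm_nondegenerate (ZMod p) F).1 a
      simp_rw [Algebra.traceForm_apply] at htr
      by_contra! hfa
      exact ha (htr hfa)
    obtain ⟨b, hb⟩ := hnd
    rw [AddChar.ne_one_iff]
    refine ⟨b, ?_⟩
    rw [AddChar.mulShift_apply]
    intro h1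
    exact hb ((AddChar.IsPrimitive.zmod_char_eq_one_iff p
      (AddChar.zmodChar_primitive_of_primitive_root p hprim) _).mp h1)
  -- conj of ψ
  have hconj : ∀ y : F, (starRingEnd ℂ) (ψ y) = ψ (-y) := by
    intro y
    have h1 : ψ y * ψ (-y) = 1 := by
      rw [← AddChar.map_add_eq_mul, add_neg_cancel, AddChar.map_zero_eq_one]
    have h2 : ψ y * (starRingEnd ℂ) (ψ y) = 1 := by
      rw [Complex.mul_conj]
      norm_cast
      rw [← Complex.sq_norm, habsψ]; norm_num
    exact (eq_inv_of_mul_eq_one_right h2).trans (eq_inv_of_mul_eq_one_right h1).symm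
  -- rewrite summand
  have hsummand : ∀ xb : F × F,
      v f xb * (starRingEnd ℂ) (v g xb) = ψ (xb.2 * eval xb.1 (f - g)) := by
    intro xb
    rw [hv, hv, ← hψapp, ← hψapp, hconj, ← AddChar.map_add_eq_mul]
    congr 1
    simp [eval_sub]
    ring
  -- the roots set
  classical
  set R : Finset F := univ.filter (fun x => eval x (f - g) = 0) with hR
  have hfg0 : f - g ≠ 0 := sub_ne_zero.mpr hfg
  have hdeg : (f - g).natDegree < K := by
    rw [Polynomial.natDegree_lt_iff_degree_lt hfg0]
    exact lt_of_le_of_lt (degree_sub_le f g) (max_lt hf hg)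
  have hcardR : R.card ≤ K - 1 := by
    have hsub : R ⊆ (f - g).roots.toFinset := by
      intro x hx
      rw [hR, mem_filter] at hx
      rw [Multiset.mem_toFinset, mem_roots hfg0]
      exact hx.2
    calc R.card ≤ (f - g).roots.toFinset.card := card_le_card hsub
      _ ≤ Multiset.card (f - g).roots := (f - g).roots.toFinset_card_le
      _ ≤ (f - g).natDegree := (f - g).card_roots'
      _ ≤ K - 1 := Nat.le_sub_one_of_lt hdeg
  -- compute the inner product
  have hsum : ∑ xb : F × F, v f xb * (starRingEnd ℂ) (v g xb) = (R.card : ℂ) * q := by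
    simp_rw [hsummand]
    rw [Fintype.sum_prod_type]
    have : ∀ x : F, ∑ b : F, ψ (b * eval x (f - g))
        = if eval x (f - g) = 0 then (q : ℂ) else 0 := by
      intro x
      rw [AddChar.sum_mulShift _ hψprim]
      split_ifs <;> simp <;> rfl
    calc (∑ x : F, ∑ b : F, ψ (b * eval x (f - g)))
        = ∑ x : F, if eval x (f - g) = 0 then (q : ℂ) else 0 := by
          exact Finset.sum_congr rfl fun x _ => this x
      _ = (R.card : ℂ) * q := by rw [← Finset.sum_filter, ← hR, Finset.sum_const, nsmul_eq_mul]
  have key : ‖∑ xb : F × F, v f xb * (starRingEnd ℂ) (v g xb)‖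
      ≤ ((K : ℝ) - 1) * (q : ℝ) := by
    rw [hsum]
    rw [norm_mul]
    simp only [Complex.norm_natCast]
    apply mul_le_mul_of_nonneg_right _ (by positivity)
    have : (R.card : ℝ) ≤ ((K - 1 : ℕ) : ℝ) := by exact_mod_cast hcardR
    refine this.trans ?_
    push_cast [Nat.cast_sub hK1]
    norm_num
  refine ⟨key, ?_, ?_⟩
  · -- norm computation
    have hnorm : ∀ h : Polynomial F,
        Real.sqrt (∑ xb : F × F, Complex.normSq (v h xb)) = q := by
      intro h
      have : ∀ xb : F × F, Complex.normSq (v h xb) = 1 := by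
        intro xb
        rw [hv, ← hψapp]
        rw [← Complex.sq_norm, habsψ]; norm_num
      simp_rw [this]
      rw [Finset.sum_const, card_univ, Fintype.card_prod, nsmul_eq_mul, mul_one]
      push_cast
      rw [← sq, Real.sqrt_sq (by positivity)]
    rw [hnorm, hnorm]
    rw [div_le_div_iff₀ (by positivity) (by positivity)]
    calc ‖∑ xb : F × F, v f xb * (starRingEnd ℂ) (v g xb)‖
        * (q : ℝ) ≤ (((K : ℝ) - 1) * q) * q :=
          mul_le_mul_of_nonneg_right key (by positivity)
      _ = ((K : ℝ) - 1) * ((q : ℝ) * q) := by ring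
  · have : (q : ℝ) ≠ 0 := by positivity
    field_simp
    ring
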